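/- arXiv:2512.23405 — 3 statements merged into one kernel-verified Lean document; each statement's English description precedes it below -/
import Mathlib

section
/- Let (Ω, 𝔽, ℙ) be a probability space carrying a random vector x : Ω → ℝ^n, a random matrix F : Ω → ℝ^{m×n}, and a random vector ε : Ω → ℝ^m, mutually independent, all with finite second moments, and with E[ε] = 0. Set y = F x + ε and a = vec(F) (row-wise vectorization). Then the cross-covariance matrix of a and y satisfies C_ay = C_aa (I_m ⊗ θ_xᵀ)ᵀ, where C_aa is the covariance matrix of a and θ_x = E[x]. -/
open Matrix MeasureTheory ProbabilityTheory
open scoped Kronecker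

private lemma l2_mul_integrable {Ω : Type*} [MeasureSpace Ω] {f g : Ω → ℝ}
    (hf : MemLp f 2 ℙ) (hg : MemLp g 2 ℙ) : Integrable (fun ω => f ω * g ω) ℙ := by
  have h := hf.smul hg (r := 1)
    (hpqr := ⟨by simp [one_div, ENNReal.inv_two_add_inv_two]⟩)
  rw [memLp_one_iff_integrable] at h
  have e : (g • f) = fun ω => f ω * g ω := by funext ω; simp [mul_comm]
  rwa [e] at h

/-- In the blind model `y = F x + ε` with `x`, `F`, `ε` mutually independent,
square integrable, and `E[ε] = 0`, letting `a = vec(F)` (row-wise vectorization, realized as a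
vector indexed by `Fin m × Fin n`), the cross-covariance of `a` and `y` satisfies
`C_ay = C_aa (I_m ⊗ θ_xᵀ)ᵀ`, where `C_aa` is the covariance of `a` and `θ_x = E[x]`. -/
theorem crossCov_operator_obs
    {Ω : Type*} [MeasureSpace Ω] [IsProbabilityMeasure (ℙ : Measure Ω)]
    {n m : ℕ}
    (x : Ω → Fin n → ℝ) (F : Ω → Fin m → Fin n → ℝ) (ε : Ω → Fin m → ℝ)
    (hxm : Measurable x) (hFm : Measurable F) (hεm : Measurable ε)
    (hx2 : ∀ i, MemLp (fun ω => x ω i) 2 ℙ)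
    (hF2 : ∀ i j, MemLp (fun ω => F ω i j) 2 ℙ)
    (hε2 : ∀ i, MemLp (fun ω => ε ω i) 2 ℙ)
    (hindep₁ : IndepFun x F ℙ)
    (hindep₂ : IndepFun (fun ω => (x ω, F ω)) ε ℙ)
    (hε0 : ∀ i, ∫ ω, ε ω i = 0)
    (y : Ω → Fin m → ℝ) (hy : y = fun ω => Matrix.of (F ω) *ᵥ x ω + ε ω)
    (a : Ω → Fin m × Fin n → ℝ) (ha : a = fun ω p => F ω p.1 p.2)
    (θx : Fin n → ℝ) (hθx : θx = fun i => ∫ ω, x ω i)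
    (θy : Fin m → ℝ) (hθy : θy = fun i => ∫ ω, y ω i)
    (θa : Fin m × Fin n → ℝ) (hθa : θa = fun p => ∫ ω, a ω p)
    (Cay : Matrix (Fin m × Fin n) (Fin m) ℝ)
    (hCay : Cay = Matrix.of fun p j => ∫ ω, (a ω p - θa p) * (y ω j - θy j))
    (Caa : Matrix (Fin m × Fin n) (Fin m × Fin n) ℝ)
    (hCaa : Caa = Matrix.of fun p q => ∫ ω, (a ω p - θa p) * (a ω q - θa q))
    (G : Matrix (Fin m) (Fin m × Fin n) ℝ)
    (hG : G = Matrix.reindex (Equiv.prodPUnit (Fin m)) (Equiv.refl (Fin m × Fin n))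
      ((1 : Matrix (Fin m) (Fin m) ℝ) ⊗ₖ Matrix.replicateRow Unit θx)) :
    Cay = Caa * Gᵀ := by
  subst hy ha hθx hθy hθa hCay hCaa hG
  have hmF : ∀ (i : Fin m) (k : Fin n), Measurable (fun ω => F ω i k) := fun i k =>
    (measurable_pi_apply k).comp ((measurable_pi_apply i).comp hFm)
  have hmx : ∀ k : Fin n, Measurable (fun ω => x ω k) := fun k =>
    (measurable_pi_apply k).comp hxm
  ext p j
  simp only [Matrix.mul_apply, Matrix.transpose_apply, Matrix.of_apply]
  set c : ℝ := ∫ ω, F ω p.1 p.2 with hc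
  have hA2 : MemLp (fun ω => F ω p.1 p.2 - c) 2 ℙ := (hF2 p.1 p.2).sub (memLp_const c)
  have hAmeas : Measurable (fun ω => F ω p.1 p.2 - c) := (hmF _ _).sub measurable_const
  have hAint : Integrable (fun ω => F ω p.1 p.2 - c) ℙ := hA2.integrable one_le_two
  have hA0 : ∫ ω, (F ω p.1 p.2 - c) = 0 := by
    rw [integral_sub ((hF2 p.1 p.2).integrable one_le_two) (integrable_const c)]
    simp [hc]
  have hmul_int : ∀ (k : Fin m) (l : Fin n),
      Integrable (fun ω => (F ω p.1 p.2 - c) * F ω k l) ℙ :=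
    fun k l => l2_mul_integrable hA2 (hF2 k l)
  have hindFx : ∀ l : Fin n,
      IndepFun (fun ω => (F ω p.1 p.2 - c) * F ω j l) (fun ω => x ω l) ℙ := fun l =>
    hindep₁.symm.comp (φ := fun M : Fin m → Fin n → ℝ => (M p.1 p.2 - c) * M j l)
      (ψ := fun v : Fin n → ℝ => v l)
      (by fun_prop)
      (measurable_pi_apply l)
  have hterm : ∀ l : Fin n,
      ∫ ω, (F ω p.1 p.2 - c) * F ω j l * x ω l
        = (∫ ω, (F ω p.1 p.2 - c) * F ω j l) * ∫ ω, x ω l := fun l =>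
    (hindFx l).integral_fun_mul_eq_mul_integral ((hAmeas.mul (hmF j l)).aestronglyMeasurable)
      ((hmx l).aestronglyMeasurable)
  have hterm_int : ∀ l : Fin n,
      Integrable (fun ω => (F ω p.1 p.2 - c) * F ω j l * x ω l) ℙ := fun l =>
    (hindFx l).integrable_mul (hmul_int j l) ((hx2 l).integrable one_le_two)
  have hindAε : IndepFun (fun ω => F ω p.1 p.2 - c) (fun ω => ε ω j) ℙ :=
    hindep₂.comp (φ := fun v : (Fin n → ℝ) × (Fin m → Fin n → ℝ) => v.2 p.1 p.2 - c)
      (ψ := fun e : Fin m → ℝ => e j)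
      (by fun_prop)
      (measurable_pi_apply j)
  have hAε : ∫ ω, (F ω p.1 p.2 - c) * ε ω j = 0 := by
    have h : ∫ ω, (F ω p.1 p.2 - c) * ε ω j
        = (∫ ω, (F ω p.1 p.2 - c)) * ∫ ω, ε ω j :=
      hindAε.integral_fun_mul_eq_mul_integral hAmeas.aestronglyMeasurable
        ((measurable_pi_apply j).comp hεm).aestronglyMeasurable
    rw [h, hA0, zero_mul]
  have hAεint : Integrable (fun ω => (F ω p.1 p.2 - c) * ε ω j) ℙ :=
    l2_mul_integrable hA2 (hε2 j)
  set θyj : ℝ := ∫ ω, (Matrix.of (F ω) *ᵥ x ω + ε ω) j with hθyj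
  have expand : (fun ω => (F ω p.1 p.2 - c) * ((Matrix.of (F ω) *ᵥ x ω + ε ω) j - θyj))
      = fun ω => (∑ l : Fin n, (F ω p.1 p.2 - c) * F ω j l * x ω l)
          + ((F ω p.1 p.2 - c) * ε ω j + (-θyj) * (F ω p.1 p.2 - c)) := by
    funext ω
    simp only [Matrix.mulVec, dotProduct, Pi.add_apply, Matrix.of_apply]
    rw [mul_sub, mul_add, Finset.mul_sum]
    simp only [← mul_assoc]
    ring
  have hCentry : ∀ (k : Fin m) (l : Fin n),
      (∫ ω, (F ω p.1 p.2 - c) * (F ω k l - ∫ ω', F ω' k l))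
        = ∫ ω, (F ω p.1 p.2 - c) * F ω k l := by
    intro k l
    have e : (fun ω => (F ω p.1 p.2 - c) * (F ω k l - ∫ ω', F ω' k l))
        = fun ω => (F ω p.1 p.2 - c) * F ω k l
            - (∫ ω', F ω' k l) * (F ω p.1 p.2 - c) := by
      funext ω; ring
    rw [e, integral_sub (hmul_int k l) (hAint.const_mul _), integral_const_mul, hA0,
      mul_zero, sub_zero]
  have hGentry : ∀ q : Fin m × Fin n,
      (Matrix.reindex (Equiv.prodPUnit (Fin m)) (Equiv.refl (Fin m × Fin n))
        ((1 : Matrix (Fin m) (Fin m) ℝ) ⊗ₖ Matrix.replicateRow Unit (fun i => ∫ ω, x ω i))) j q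
      = (if j = q.1 then (∫ ω, x ω q.2) else 0) := by
    intro q
    simp [Matrix.reindex_apply, Matrix.submatrix_apply, Matrix.kroneckerMap_apply,
      Matrix.one_apply, Matrix.replicateRow_apply, ite_mul, one_mul, zero_mul]
  have h1 : ∫ ω, ((∑ l : Fin n, (F ω p.1 p.2 - c) * F ω j l * x ω l)
        + ((F ω p.1 p.2 - c) * ε ω j + (-θyj) * (F ω p.1 p.2 - c)))
      = (∫ ω, ∑ l : Fin n, (F ω p.1 p.2 - c) * F ω j l * x ω l)
        + ∫ ω, ((F ω p.1 p.2 - c) * ε ω j + (-θyj) * (F ω p.1 p.2 - c)) :=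
    integral_add (integrable_finset_sum _ fun l _ => hterm_int l)
      (hAεint.add (hAint.const_mul (-θyj)))
  have h2 : ∫ ω, ∑ l : Fin n, (F ω p.1 p.2 - c) * F ω j l * x ω l
      = ∑ l : Fin n, ∫ ω, (F ω p.1 p.2 - c) * F ω j l * x ω l :=
    integral_finset_sum _ fun l _ => hterm_int l
  have h3 : ∫ ω, ((F ω p.1 p.2 - c) * ε ω j + (-θyj) * (F ω p.1 p.2 - c))
      = (∫ ω, (F ω p.1 p.2 - c) * ε ω j) + ∫ ω, (-θyj) * (F ω p.1 p.2 - c) :=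
    integral_add hAεint (hAint.const_mul (-θyj))
  have h4 : ∫ ω, (-θyj) * (F ω p.1 p.2 - c) = (-θyj) * ∫ ω, (F ω p.1 p.2 - c) :=
    integral_const_mul _ _
  rw [expand, h1, h2, h3, h4, hAε, hA0, mul_zero, add_zero, add_zero]
  simp only [hterm, hCentry, hGentry, Fintype.sum_prod_type, mul_ite, mul_zero,
    Finset.sum_ite_eq, Finset.sum_ite_eq', Finset.mem_univ, if_true]
  rw [Finset.sum_comm]
  simp [Finset.sum_ite_eq]
end

section
/- Let (Ω, 𝔽, ℙ) carry a random vector x : Ω → ℝ^n, a random matrix F : Ω → ℝ^{m×n}, and a random vector ε : Ω → ℝ^m, mutually independent, with finite second moments, and E[ε] = 0. Set y = F x + ε, a = vec(F), Θ_F = E[F], θ_x = E[x]. Let C_{F_i F_j} ∈ ℝ^{n×n} denote the cross-covariance matrix of the i-th and j-th rows of F, and define D ∈ ℝ^{m×m} by D_{ij} = Σ_{k=1}^n Σ_{q=1}^n (C_{F_i F_j} ⊙ C_xx)_{kq}, where ⊙ is the entrywise (Hadamard) product. Then the covariance matrix of y decomposes as C_yy = Θ_F C_xx Θ_Fᵀ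 + (I_m ⊗ θ_xᵀ) C_aa (I_m ⊗ θ_xᵀ)ᵀ + D + C_εε. -/
open Matrix MeasureTheory ProbabilityTheory
open scoped Kronecker

private lemma integrable_mul_of_memL2 {α : Type*} {mα : MeasurableSpace α} {μ : Measure α}
    {f g : α → ℝ} (hf : MemLp f 2 μ) (hg : MemLp g 2 μ) :
    Integrable (fun ω => f ω * g ω) μ := by
  have h : Integrable (fun ω => (((f ω + g ω) ^ 2 - f ω ^ 2) - g ω ^ 2) / 2) μ :=
    (((hf.add hg).integrable_sq.sub hf.integrable_sq).sub hg.integrable_sq).div_const 2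
  exact h.congr (Filter.Eventually.of_forall fun ω => by ring)

private lemma integrable_centered_mul {α : Type*} {mα : MeasurableSpace α} {μ : Measure α}
    [IsProbabilityMeasure μ] {A B : α → ℝ} (hA : Integrable A μ) (hB : Integrable B μ)
    (hAB : Integrable (fun ω => A ω * B ω) μ) (a b : ℝ) :
    Integrable (fun ω => (A ω - a) * (B ω - b)) μ := by
  have h : Integrable (fun ω => (A ω * B ω - a * B ω - b * A ω) + a * b) μ :=
    ((hAB.sub (hB.const_mul a)).sub (hA.const_mul b)).add (integrable_const _)
  exact h.congr (Filter.Eventually.of_forall fun ω => by ring)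

private lemma integral_centered_mul {α : Type*} {mα : MeasurableSpace α} {μ : Measure α}
    [IsProbabilityMeasure μ] {A B : α → ℝ} (hA : Integrable A μ) (hB : Integrable B μ)
    (hAB : Integrable (fun ω => A ω * B ω) μ) (a b : ℝ) :
    ∫ ω, (A ω - a) * (B ω - b) ∂μ
      = (∫ ω, A ω * B ω ∂μ) - a * (∫ ω, B ω ∂μ) - b * (∫ ω, A ω ∂μ) + a * b := by
  have h : ∀ ω, (A ω - a) * (B ω - b) = (A ω * B ω - a * B ω - b * A ω) + a * b :=
    fun ω => by ring
  simp_rw [h]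
  have e2 : ∫ ω, ((A ω * B ω - a * B ω - b * A ω) + a * b) ∂μ
      = (∫ ω, (A ω * B ω - a * B ω - b * A ω) ∂μ) + ∫ _ω, (a * b : ℝ) ∂μ :=
    integral_add ((hAB.sub (hB.const_mul a)).sub (hA.const_mul b)) (integrable_const _)
  have e3 : ∫ ω, (A ω * B ω - a * B ω - b * A ω) ∂μ
      = (∫ ω, (A ω * B ω - a * B ω) ∂μ) - ∫ ω, b * A ω ∂μ :=
    integral_sub (hAB.sub (hB.const_mul a)) (hA.const_mul b)
  have e4 : ∫ ω, (A ω * B ω - a * B ω) ∂μ = (∫ ω, A ω * B ω ∂μ) - ∫ ω, a * B ω ∂μ :=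
    integral_sub hAB (hB.const_mul a)
  rw [e2, e3, e4, integral_const_mul, integral_const_mul, integral_const]
  simp

/-- In the blind model `y = F x + ε` with `x`, `F`, `ε` mutually independent,
square integrable, and `E[ε] = 0`, the covariance of the observation decomposes as
`C_yy = Θ_F C_xx Θ_Fᵀ + (I_m ⊗ θ_xᵀ) C_aa (I_m ⊗ θ_xᵀ)ᵀ + D + C_εε`,
where `a = vec(F)`, `Θ_F = E[F]`, `θ_x = E[x]`, and
`D_{ij} = Σ_k Σ_q (C_{F_i F_j} ⊙ C_xx)_{kq}` with `C_{F_i F_j}` the cross-covariance of the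
`i`-th and `j`-th rows of `F` and `⊙` the Hadamard product. -/
theorem cov_obs_decomposition
    {Ω : Type*} [MeasureSpace Ω] [IsProbabilityMeasure (ℙ : Measure Ω)]
    {n m : ℕ}
    (x : Ω → Fin n → ℝ) (F : Ω → Fin m → Fin n → ℝ) (ε : Ω → Fin m → ℝ)
    (hxm : Measurable x) (hFm : Measurable F) (hεm : Measurable ε)
    (hx2 : ∀ i, MemLp (fun ω => x ω i) 2 ℙ)
    (hF2 : ∀ i j, MemLp (fun ω => F ω i j) 2 ℙ)
    (hε2 : ∀ i, MemLp (fun ω => ε ω i) 2 ℙ)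
    (hindep₁ : IndepFun x F ℙ)
    (hindep₂ : IndepFun (fun ω => (x ω, F ω)) ε ℙ)
    (hε0 : ∀ i, ∫ ω, ε ω i = 0)
    (y : Ω → Fin m → ℝ) (hy : y = fun ω => Matrix.of (F ω) *ᵥ x ω + ε ω)
    (a : Ω → Fin m × Fin n → ℝ) (ha : a = fun ω p => F ω p.1 p.2)
    (θx : Fin n → ℝ) (hθx : θx = fun i => ∫ ω, x ω i)
    (θy : Fin m → ℝ) (hθy : θy = fun i => ∫ ω, y ω i)
    (θa : Fin m × Fin n → ℝ) (hθa : θa = fun p => ∫ ω, a ω p)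
    (ΘF : Matrix (Fin m) (Fin n) ℝ) (hΘF : ΘF = Matrix.of fun i j => ∫ ω, F ω i j)
    (Cxx : Matrix (Fin n) (Fin n) ℝ)
    (hCxx : Cxx = Matrix.of fun i j => ∫ ω, (x ω i - θx i) * (x ω j - θx j))
    (Cyy : Matrix (Fin m) (Fin m) ℝ)
    (hCyy : Cyy = Matrix.of fun i j => ∫ ω, (y ω i - θy i) * (y ω j - θy j))
    (Caa : Matrix (Fin m × Fin n) (Fin m × Fin n) ℝ)
    (hCaa : Caa = Matrix.of fun p q => ∫ ω, (a ω p - θa p) * (a ω q - θa q))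
    (Cεε : Matrix (Fin m) (Fin m) ℝ)
    (hCεε : Cεε = Matrix.of fun i j => ∫ ω, ε ω i * ε ω j)
    (CF : Fin m → Fin m → Matrix (Fin n) (Fin n) ℝ)
    (hCF : CF = fun i j => Matrix.of fun k q =>
      ∫ ω, (F ω i k - ΘF i k) * (F ω j q - ΘF j q))
    (D : Matrix (Fin m) (Fin m) ℝ)
    (hD : D = Matrix.of fun i j => ∑ k, ∑ q, (CF i j ⊙ Cxx) k q)
    (G : Matrix (Fin m) (Fin m × Fin n) ℝ)
    (hG : G = Matrix.reindex (Equiv.prodPUnit (Fin m)) (Equiv.refl (Fin m × Fin n))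
      ((1 : Matrix (Fin m) (Fin m) ℝ) ⊗ₖ Matrix.replicateRow Unit θx)) :
    Cyy = ΘF * Cxx * ΘFᵀ + G * Caa * Gᵀ + D + Cεε := by
  classical
  -- componentwise measurability
  have hxk : ∀ k, Measurable fun ω => x ω k := fun k => (measurable_pi_apply k).comp hxm
  have hFik : ∀ i k, Measurable fun ω => F ω i k := fun i k =>
    (measurable_pi_apply k).comp ((measurable_pi_apply i).comp hFm)
  have hεi : ∀ i, Measurable fun ω => ε ω i := fun i => (measurable_pi_apply i).comp hεm
  -- componentwise integrability
  have hxI : ∀ k, Integrable (fun ω => x ω k) ℙ := fun k => (hx2 k).integrable one_le_two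
  have hFI : ∀ i k, Integrable (fun ω => F ω i k) ℙ := fun i k => (hF2 i k).integrable one_le_two
  have hεI : ∀ i, Integrable (fun ω => ε ω i) ℙ := fun i => (hε2 i).integrable one_le_two
  -- independence of functionals of F and functionals of x
  have hIndFx : ∀ {φ : (Fin m → Fin n → ℝ) → ℝ} {ψ : (Fin n → ℝ) → ℝ},
      Measurable φ → Measurable ψ →
      IndepFun (fun ω => φ (F ω)) (fun ω => ψ (x ω)) ℙ := fun hφ hψ =>
    (hindep₁.comp hψ hφ).symm
  -- basic expectations
  have hθxk : ∀ k, θx k = ∫ ω, x ω k := fun k => by rw [hθx]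
  have hΘFik : ∀ i k, ΘF i k = ∫ ω, F ω i k := fun i k => by rw [hΘF]; rfl
  -- E[F_ik x_k'] = ΘF_ik θx_k'
  have hIndFxkk : ∀ i k k', IndepFun (fun ω => F ω i k) (fun ω => x ω k') ℙ := fun i k k' =>
    hIndFx (φ := fun M => M i k) (ψ := fun v => v k')
      ((measurable_pi_apply k).comp (measurable_pi_apply i)) (measurable_pi_apply k')
  have hIFx : ∀ i k, Integrable (fun ω => F ω i k * x ω k) ℙ := fun i k =>
    ((hIndFxkk i k k).integrable_mul (hFI i k) (hxI k)).congr
      (Filter.Eventually.of_forall fun ω => rfl)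
  have hEFx : ∀ i k, ∫ ω, F ω i k * x ω k = ΘF i k * θx k := by
    intro i k
    rw [hΘFik, hθxk]
    exact (hIndFxkk i k k).integral_fun_mul_eq_mul_integral (hFik i k).aestronglyMeasurable
      (hxk k).aestronglyMeasurable
  -- products of pairs
  have hIxx : ∀ k q, Integrable (fun ω => x ω k * x ω q) ℙ := fun k q =>
    integrable_mul_of_memL2 (hx2 k) (hx2 q)
  have hIFF : ∀ i k j q, Integrable (fun ω => F ω i k * F ω j q) ℙ := fun i k j q =>
    integrable_mul_of_memL2 (hF2 i k) (hF2 j q)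
  have hIεε : ∀ i j, Integrable (fun ω => ε ω i * ε ω j) ℙ := fun i j =>
    integrable_mul_of_memL2 (hε2 i) (hε2 j)
  -- covariance entries as raw second moments
  have hCxx' : ∀ k q, Cxx k q = (∫ ω, x ω k * x ω q) - θx k * θx q := by
    intro k q
    rw [hCxx]
    show ∫ ω, (x ω k - θx k) * (x ω q - θx q) = _
    rw [integral_centered_mul (hxI k) (hxI q) (hIxx k q), ← hθxk, ← hθxk]
    ring
  have hCF' : ∀ i j k q, CF i j k q = (∫ ω, F ω i k * F ω j q) - ΘF i k * ΘF j q := by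
    intro i j k q
    rw [hCF]
    show ∫ ω, (F ω i k - ΘF i k) * (F ω j q - ΘF j q) = _
    rw [integral_centered_mul (hFI i k) (hFI j q) (hIFF i k j q), ← hΘFik, ← hΘFik]
    ring
  -- the centered summands
  set T : Fin m → Fin n → Ω → ℝ := fun i k ω => F ω i k * x ω k - ΘF i k * θx k with hT
  have hTm : ∀ i k, Measurable (T i k) := fun i k =>
    ((hFik i k).mul (hxk k)).sub measurable_const
  have hIT : ∀ i k, Integrable (T i k) ℙ := fun i k => (hIFx i k).sub (integrable_const _)
  -- integrability of products of pairs F_ik x_k * F_jq x_q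
  have hIFxFx : ∀ i k j q, Integrable (fun ω => (F ω i k * x ω k) * (F ω j q * x ω q)) ℙ := by
    intro i k j q
    have hind : IndepFun (fun ω => F ω i k * F ω j q) (fun ω => x ω k * x ω q) ℙ :=
      hIndFx (φ := fun M => M i k * M j q) (ψ := fun v => v k * v q)
        (((measurable_pi_apply k).comp (measurable_pi_apply i)).fun_mul
          ((measurable_pi_apply q).comp (measurable_pi_apply j)))
        ((measurable_pi_apply k).fun_mul (measurable_pi_apply q))
    exact (hind.integrable_mul (hIFF i k j q) (hIxx k q)).congr
      (Filter.Eventually.of_forall fun ω => by simp only [Pi.mul_apply]; ring)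
  have hEFxFx : ∀ i k j q, ∫ ω, (F ω i k * x ω k) * (F ω j q * x ω q)
      = (∫ ω, F ω i k * F ω j q) * (∫ ω, x ω k * x ω q) := by
    intro i k j q
    have hind : IndepFun (fun ω => F ω i k * F ω j q) (fun ω => x ω k * x ω q) ℙ :=
      hIndFx (φ := fun M => M i k * M j q) (ψ := fun v => v k * v q)
        (((measurable_pi_apply k).comp (measurable_pi_apply i)).fun_mul
          ((measurable_pi_apply q).comp (measurable_pi_apply j)))
        ((measurable_pi_apply k).fun_mul (measurable_pi_apply q))
    have h := hind.integral_fun_mul_eq_mul_integral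
      (((hFik i k).mul (hFik j q)).aestronglyMeasurable)
      (((hxk k).mul (hxk q)).aestronglyMeasurable)
    calc ∫ ω, (F ω i k * x ω k) * (F ω j q * x ω q)
        = ∫ ω, (F ω i k * F ω j q) * (x ω k * x ω q) :=
          integral_congr_ae (Filter.Eventually.of_forall fun ω => by ring)
      _ = _ := h
  have hITT : ∀ i k j q, Integrable (fun ω => T i k ω * T j q ω) ℙ := fun i k j q =>
    integrable_centered_mul (hIFx i k) (hIFx j q) (hIFxFx i k j q) _ _
  -- the key second-moment identity for the summands
  have hETT : ∀ i k j q, ∫ ω, T i k ω * T j q ω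
      = CF i j k q * Cxx k q + ΘF i k * Cxx k q * ΘF j q + θx k * CF i j k q * θx q := by
    intro i k j q
    have h1 : ∫ ω, T i k ω * T j q ω
        = (∫ ω, (F ω i k * x ω k) * (F ω j q * x ω q))
          - (ΘF i k * θx k) * (∫ ω, F ω j q * x ω q)
          - (ΘF j q * θx q) * (∫ ω, F ω i k * x ω k)
          + (ΘF i k * θx k) * (ΘF j q * θx q) :=
      integral_centered_mul (hIFx i k) (hIFx j q) (hIFxFx i k j q) _ _
    rw [h1, hEFx, hEFx, hEFxFx, hCF' i j k q, hCxx' k q]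
    ring
  -- pointwise description of y and its mean
  have hy' : ∀ i ω, y ω i = (∑ k, F ω i k * x ω k) + ε ω i := by
    intro i ω
    rw [hy]
    simp [Matrix.mulVec, dotProduct]
  have hθy' : ∀ i, θy i = ∑ k, ΘF i k * θx k := by
    intro i
    rw [hθy]
    show ∫ ω, y ω i = _
    simp_rw [hy' i]
    rw [integral_add (integrable_finset_sum _ fun k _ => hIFx i k) (hεI i),
      integral_finset_sum _ fun k _ => hIFx i k, hε0]
    simp [hEFx]
  have hyc : ∀ i ω, y ω i - θy i = (∑ k, T i k ω) + ε ω i := by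
    intro i ω
    rw [hy' i ω, hθy' i, hT]
    rw [Finset.sum_sub_distrib]
    ring
  -- independence of the centered sums from the noise
  have hIndSε : ∀ i j, IndepFun (fun ω => ∑ k, T i k ω) (fun ω => ε ω j) ℙ := by
    intro i j
    have hφ : Measurable (fun p : (Fin n → ℝ) × (Fin m → Fin n → ℝ) =>
        ∑ k, (p.2 i k * p.1 k - ΘF i k * θx k)) := by
      apply Finset.measurable_sum
      intro k _
      exact (((measurable_pi_apply k).comp
        ((measurable_pi_apply i).comp measurable_snd)).mul
        ((measurable_pi_apply k).comp measurable_fst)).sub measurable_const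
    exact hindep₂.comp hφ (measurable_pi_apply j)
  have hISm : ∀ i, Measurable (fun ω => ∑ k, T i k ω) :=
    fun i => Finset.measurable_sum _ fun k _ => hTm i k
  have hIS : ∀ i, Integrable (fun ω => ∑ k, T i k ω) ℙ :=
    fun i => integrable_finset_sum _ fun k _ => hIT i k
  have hESε : ∀ i j, ∫ ω, (∑ k, T i k ω) * ε ω j = 0 := by
    intro i j
    have h := (hIndSε i j).integral_fun_mul_eq_mul_integral (hISm i).aestronglyMeasurable
      (hεi j).aestronglyMeasurable
    have h' : ∫ ω, (∑ k, T i k ω) * ε ω j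
        = (∫ ω, ∑ k, T i k ω) * ∫ ω, ε ω j := h
    rw [h', hε0, mul_zero]
  have hISε : ∀ i j, Integrable (fun ω => (∑ k, T i k ω) * ε ω j) ℙ := fun i j =>
    ((hIndSε i j).integrable_mul (hIS i) (hεI j)).congr
      (Filter.Eventually.of_forall fun ω => rfl)
  -- the main entrywise computation
  have key : ∀ i j, ∫ ω, (y ω i - θy i) * (y ω j - θy j)
      = (∑ k, ∑ q, (CF i j k q * Cxx k q + ΘF i k * Cxx k q * ΘF j q
          + θx k * CF i j k q * θx q)) + ∫ ω, ε ω i * ε ω j := by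
    intro i j
    have hpt : ∀ ω, (y ω i - θy i) * (y ω j - θy j)
        = (∑ k, ∑ q, T i k ω * T j q ω) + (∑ k, T i k ω) * ε ω j
          + (∑ q, T j q ω) * ε ω i + ε ω i * ε ω j := by
      intro ω
      rw [hyc i ω, hyc j ω, ← Finset.sum_mul_sum]
      ring
    simp_rw [hpt]
    have hI1 : Integrable (fun ω => ∑ k, ∑ q, T i k ω * T j q ω) ℙ :=
      integrable_finset_sum _ fun k _ => integrable_finset_sum _ fun q _ => hITT i k j q
    have e1 : ∫ ω, ((∑ k, ∑ q, T i k ω * T j q ω) + (∑ k, T i k ω) * ε ω j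
          + (∑ q, T j q ω) * ε ω i + ε ω i * ε ω j)
        = (∫ ω, ((∑ k, ∑ q, T i k ω * T j q ω) + (∑ k, T i k ω) * ε ω j
            + (∑ q, T j q ω) * ε ω i)) + ∫ ω, ε ω i * ε ω j :=
      integral_add ((hI1.add (hISε i j)).add (hISε j i)) (hIεε i j)
    have e2 : ∫ ω, ((∑ k, ∑ q, T i k ω * T j q ω) + (∑ k, T i k ω) * ε ω j
          + (∑ q, T j q ω) * ε ω i)
        = (∫ ω, ((∑ k, ∑ q, T i k ω * T j q ω) + (∑ k, T i k ω) * ε ω j))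
          + ∫ ω, (∑ q, T j q ω) * ε ω i :=
      integral_add (hI1.add (hISε i j)) (hISε j i)
    have e3 : ∫ ω, ((∑ k, ∑ q, T i k ω * T j q ω) + (∑ k, T i k ω) * ε ω j)
        = (∫ ω, (∑ k, ∑ q, T i k ω * T j q ω)) + ∫ ω, (∑ k, T i k ω) * ε ω j :=
      integral_add hI1 (hISε i j)
    have e4 : ∀ k, ∫ ω, ∑ q, T i k ω * T j q ω = ∑ q, ∫ ω, T i k ω * T j q ω := fun k =>
      integral_finset_sum _ (fun q _ => hITT i k j q)
    rw [e1, e2, e3, hESε i j, hESε j i, add_zero, add_zero,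
      integral_finset_sum _ (fun k _ => integrable_finset_sum _ fun q _ => hITT i k j q)]
    simp_rw [e4, hETT]
  -- entries of the matrices on the right-hand side
  have hθa' : ∀ p : Fin m × Fin n, θa p = ΘF p.1 p.2 := by
    intro p
    rw [hθa, hΘF, ha]
    rfl
  have hCaa' : ∀ (i j : Fin m) (k q : Fin n), Caa (i, k) (j, q) = CF i j k q := by
    intro i j k q
    rw [hCaa, hCF]
    show ∫ ω, (a ω (i, k) - θa (i, k)) * (a ω (j, q) - θa (j, q)) = _
    simp only [ha, hθa', Matrix.of_apply]
  have hG' : ∀ (i : Fin m) (p : Fin m × Fin n),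
      G i p = if i = p.1 then θx p.2 else 0 := by
    intro i p
    rw [hG]
    simp [Matrix.reindex_apply, Matrix.submatrix_apply, Matrix.kroneckerMap_apply,
      Matrix.one_apply, Matrix.replicateRow_apply, Equiv.prodPUnit, ite_mul]
  -- assemble
  ext i j
  have hLHS : Cyy i j = ∫ ω, (y ω i - θy i) * (y ω j - θy j) := by rw [hCyy]; rfl
  have hR1 : (ΘF * Cxx * ΘFᵀ) i j = ∑ k, ∑ q, ΘF i k * Cxx k q * ΘF j q := by
    simp only [Matrix.mul_apply, Matrix.transpose_apply, Finset.sum_mul]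
    rw [Finset.sum_comm]
  have hR2 : (G * Caa * Gᵀ) i j = ∑ k, ∑ q, θx k * CF i j k q * θx q := by
    simp only [Matrix.mul_apply, Matrix.transpose_apply]
    rw [Fintype.sum_prod_type]
    have : ∀ r : Fin m × Fin n,
        (∑ p : Fin m × Fin n, G i p * Caa p r) = ∑ k, θx k * Caa (i, k) r := by
      intro r
      rw [Fintype.sum_prod_type]
      simp only [hG', ite_mul, zero_mul]
      rw [Finset.sum_comm]
      simp [Finset.sum_ite_eq]
    simp_rw [this]
    have h2 : ∀ q : Fin n, (∑ j' : Fin m, (∑ k, θx k * Caa (i, k) (j', q)) * G j (j', q))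
        = ∑ k, θx k * Caa (i, k) (j, q) * θx q := by
      intro q
      simp only [hG', mul_ite, mul_zero]
      simp [Finset.sum_ite_eq, Finset.sum_mul]
    rw [Finset.sum_comm]
    simp_rw [h2]
    rw [Finset.sum_comm]
    simp_rw [hCaa']
  have hR3 : D i j = ∑ k, ∑ q, CF i j k q * Cxx k q := by
    rw [hD]
    show ∑ k, ∑ q, (CF i j ⊙ Cxx) k q = _
    simp [Matrix.hadamard]
  have hR4 : Cεε i j = ∫ ω, ε ω i * ε ω j := by rw [hCεε]; rfl
  rw [Matrix.add_apply, Matrix.add_apply, Matrix.add_apply, hLHS, key, hR1, hR2, hR3, hR4]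
  rw [← Finset.sum_add_distrib]
  simp_rw [← Finset.sum_add_distrib]
  ring_nf
  rw [add_comm]
  congr 1
  apply Finset.sum_congr rfl
  intro k _
  apply Finset.sum_congr rfl
  intro q _
  ring
end

section
/- Let ς be a nonnegative real-valued square-integrable random variable with E[ς²] > 0, let α > 0 and β_λ > 0. Then E[( E[ς²]^α E[ς] ς / (E[ς²]^{α+1} + β_λ) − 1 )²] ≤ Var(ς)/E[ς²] + β_λ² / (E[ς²]^{α+1} + β_λ)². -/
open MeasureTheory ProbabilityTheory

/-- For a nonnegative square-integrable random variable `ς` with `E[ς²] > 0`,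
`α > 0` and `β_λ > 0`,
`E[( E[ς²]^α E[ς] ς / (E[ς²]^{α+1} + β_λ) − 1 )²] ≤ Var(ς)/E[ς²] + β_λ²/(E[ς²]^{α+1} + β_λ)²`,
where `Var(ς) = E[ς²] − E[ς]²`. -/
theorem singular_value_entry_bound
    {Ω : Type*} [MeasureSpace Ω] [IsProbabilityMeasure (ℙ : Measure Ω)]
    (ς : Ω → ℝ) (hmeas : Measurable ς) (hnonneg : ∀ ω, 0 ≤ ς ω)
    (h2 : MemLp ς 2 ℙ) (hE2 : 0 < ∫ ω, ς ω ^ 2)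
    (α βlam : ℝ) (hα : 0 < α) (hβlam : 0 < βlam) :
    ∫ ω, ((∫ ω', ς ω' ^ 2) ^ α * (∫ ω', ς ω') * ς ω
            / ((∫ ω', ς ω' ^ 2) ^ (α + 1) + βlam) - 1) ^ 2
      ≤ ((∫ ω, ς ω ^ 2) - (∫ ω, ς ω) ^ 2) / (∫ ω, ς ω ^ 2)
        + βlam ^ 2 / ((∫ ω, ς ω ^ 2) ^ (α + 1) + βlam) ^ 2 := by
  set m2 : ℝ := ∫ ω, ς ω ^ 2 with hm2
  set m1 : ℝ := ∫ ω, ς ω with hm1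
  have hA : (0:ℝ) < m2 ^ α := Real.rpow_pos_of_pos hE2 α
  have hpow : m2 ^ (α + 1) = m2 ^ α * m2 := by
    rw [Real.rpow_add hE2, Real.rpow_one]
  have hD : (0:ℝ) < m2 ^ (α + 1) + βlam := by positivity
  set D : ℝ := m2 ^ (α + 1) + βlam with hDdef
  set c : ℝ := m2 ^ α * m1 / D with hc
  -- integrability
  have hsq : Integrable (fun ω => ς ω ^ 2) ℙ := by
    have := h2.integrable_sq
    simpa [sq] using this
  have h1 : Integrable ς ℙ := h2.integrable one_le_two
  -- m1 ≥ 0 and m1² ≤ m2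
  have hm1nonneg : 0 ≤ m1 := integral_nonneg hnonneg
  have hvar : m1 ^ 2 ≤ m2 := by
    have hv := ProbabilityTheory.variance_nonneg ς (ℙ : Measure Ω)
    rw [ProbabilityTheory.variance_eq_sub h2] at hv
    have : 0 ≤ m2 - m1 ^ 2 := by simpa [hm2, hm1, sq] using hv
    linarith
  -- compute the integral
  have hexp : ∀ ω, (m2 ^ α * m1 * ς ω / D - 1) ^ 2
      = c ^ 2 * ς ω ^ 2 - 2 * c * ς ω + 1 := by
    intro ω
    rw [hc]
    field_simp
    ring
  have hval : ∫ ω, (m2 ^ α * m1 * ς ω / D - 1) ^ 2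
      = c ^ 2 * m2 - 2 * c * m1 + 1 := by
    simp_rw [hexp]
    rw [integral_add, integral_sub, MeasureTheory.integral_const_mul, MeasureTheory.integral_const_mul]
    · simp [hm2, hm1]
    · exact (hsq.const_mul _)
    · exact (h1.const_mul _)
    · exact ((hsq.const_mul _).sub (h1.const_mul _))
    · exact integrable_const 1
  rw [hval]
  -- final algebraic inequality
  rw [← sub_nonneg]
  have key : (m2 - m1 ^ 2) / m2 + βlam ^ 2 / D ^ 2 - (c ^ 2 * m2 - 2 * c * m1 + 1)
      = (m2 - m1 ^ 2) * βlam ^ 2 / (m2 * D ^ 2) := by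
    rw [hc, hDdef, hpow]
    field_simp
    ring
  rw [key]
  exact div_nonneg (mul_nonneg (by linarith) (sq_nonneg _)) (by positivity)
end
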